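/- Let a₁, a₂, a₃, b₁, b₂ be positive reals with s := b₁ + b₂ − a₁ − a₂ − a₃ > 0. Then the partial sums ∑_{l=0}^{m−1} Γ(a₁+l)Γ(a₂+l)Γ(a₃+l)/(Γ(b₁+l)Γ(b₂+l)Γ(1+l)) converge as m → ∞ to the limit Γ(a₁)Γ(a₂)Γ(s)/(Γ(a₁+s)Γ(a₂+s)) · ∑_{k=0}^{∞} (s)_k·(b₂−a₃)_k·(b₁−a₃)_k / ((a₁+s)_k·(a₂+s)_k·k!), and the error after m terms is O(m^{−s}). -/

import Mathlib

open Real Filter Asymptotics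

/-- Pochhammer symbol (rising factorial). -/
noncomputable def poch (x : ℝ) (n : ℕ) : ℝ := ∏ i ∈ Finset.range n, (x + i)

lemma poch_zero (x : ℝ) : poch x 0 = 1 := by simp [poch]

lemma poch_succ (x : ℝ) (n : ℕ) : poch x (n + 1) = poch x n * (x + n) := by
  simp [poch, Finset.prod_range_succ]

lemma poch_pos {x : ℝ} (hx : 0 < x) (n : ℕ) : 0 < poch x n := by
  refine Finset.prod_pos fun i _ => by positivity

lemma poch_nonneg {x : ℝ} (hx : 0 ≤ x) (n : ℕ) : 0 ≤ poch x n := by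
  refine Finset.prod_nonneg fun i _ => by positivity

lemma poch_add (x : ℝ) (m n : ℕ) : poch x (m + n) = poch x m * poch (x + m) n := by
  induction n with
  | zero => simp [poch_zero]
  | succ n ih => rw [← add_assoc, poch_succ, ih, poch_succ]; push_cast; ring

lemma Gamma_poch {x : ℝ} (hx : 0 < x) (n : ℕ) : Gamma (x + n) = Gamma x * poch x n := by
  induction n with
  | zero => simp [poch_zero]
  | succ n ih =>
    have : x + (n + 1 : ℕ) = (x + n) + 1 := by push_cast; ring
    rw [this, Gamma_add_one (by positivity), ih, poch_succ]; ring

lemma poch_one (n : ℕ) : poch 1 n = n.factorial := by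
  induction n with
  | zero => simp [poch_zero]
  | succ n ih => rw [poch_succ, ih, Nat.factorial_succ]; push_cast; ring

/-- Euler's limit formula restated with `poch`. -/
lemma euler_poch (x : ℝ) :
    Tendsto (fun n : ℕ => poch x (n + 1) / ((n : ℝ) ^ x * n.factorial)) atTop
      (nhds (Gamma x)⁻¹) := by
  have hG := Real.GammaSeq_tendsto_Gamma x
  by_cases hpole : ∃ m : ℕ, x = -(m : ℝ)
  · obtain ⟨m, rfl⟩ := hpole
    have hzero : ∀ n : ℕ, m ≤ n → poch (-(m:ℝ)) (n+1) = 0 := by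
      intro n hn
      refine Finset.prod_eq_zero (i := m) (Finset.mem_range.2 (by omega)) (by simp)
    have hGamma0 : Gamma (-(m:ℝ)) = 0 := by
      simpa using Real.Gamma_neg_nat_eq_zero m
    rw [hGamma0, inv_zero]
    refine Tendsto.congr' ?_ tendsto_const_nhds
    filter_upwards [eventually_ge_atTop m] with n hn
    rw [hzero n hn]; simp
  · have hGne : Gamma x ≠ 0 := by
      refine Real.Gamma_ne_zero ?_
      intro m hm
      exact hpole ⟨m, hm⟩
    have hev : ∀ᶠ n : ℕ in atTop, Real.GammaSeq x n ≠ 0 :=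
      hG.eventually_ne hGne
    have h := hG.inv₀ hGne
    refine Tendsto.congr' ?_ h
    filter_upwards [hev, eventually_ge_atTop 1] with n hn hn1
    have hnpos : (0:ℝ) < (n:ℝ) ^ x * n.factorial := by
      have : (0:ℝ) < (n:ℝ) ^ x := Real.rpow_pos_of_pos (by exact_mod_cast hn1) x
      positivity
    have hdef : Real.GammaSeq x n = (n : ℝ) ^ x * n.factorial / poch x (n + 1) := rfl
    have hpoch : poch x (n+1) ≠ 0 := by
      intro h0
      apply hn
      rw [hdef, h0, div_zero]
    rw [hdef, inv_div]

lemma aux_frac_tendsto (x y : ℝ) :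
    Tendsto (fun n : ℕ => (y + n) / (x + n)) atTop (nhds 1) := by
  have hcast : Tendsto (fun n : ℕ => x + (n : ℝ)) atTop atTop :=
    tendsto_atTop_add_const_left _ x tendsto_natCast_atTop_atTop
  have h0 : Tendsto (fun n : ℕ => (y - x) / (x + n)) atTop (nhds 0) :=
    Tendsto.div_atTop tendsto_const_nhds hcast
  have h1 : Tendsto (fun n : ℕ => 1 + (y - x) / (x + n)) atTop (nhds 1) := by
    simpa using tendsto_const_nhds.add h0
  refine Tendsto.congr' ?_ h1
  filter_upwards [hcast.eventually_gt_atTop 0] with n hn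
  field_simp
  ring

lemma poch_ratio_tendsto (x : ℝ) {y : ℝ} (hy : 0 < y) :
    Tendsto (fun n : ℕ => poch x n / poch y n * (n : ℝ) ^ (y - x)) atTop
      (nhds (Gamma y / Gamma x)) := by
  have hyne : (Gamma y)⁻¹ ≠ 0 := inv_ne_zero (Gamma_pos_of_pos hy).ne'
  have h := (euler_poch x).div (euler_poch y) hyne
  have h2 := h.mul (aux_frac_tendsto x y)
  have hlim : (Gamma x)⁻¹ / (Gamma y)⁻¹ * 1 = Gamma y / Gamma x := by
    rw [mul_one, inv_div_inv]
  rw [hlim] at h2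
  refine Tendsto.congr' ?_ h2
  have hcast : Tendsto (fun n : ℕ => x + (n : ℝ)) atTop atTop :=
    tendsto_atTop_add_const_left _ x tendsto_natCast_atTop_atTop
  filter_upwards [hcast.eventually_gt_atTop 0, eventually_ge_atTop 1] with n hxn hn1
  have hnpos : (0:ℝ) < n := by exact_mod_cast hn1
  have hyn : (0:ℝ) < y + n := by positivity
  have hfac : (0:ℝ) < (n.factorial : ℝ) := by exact_mod_cast n.factorial_pos
  have hrx : (0:ℝ) < (n:ℝ) ^ x := Real.rpow_pos_of_pos hnpos x
  have hry : (0:ℝ) < (n:ℝ) ^ y := Real.rpow_pos_of_pos hnpos y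
  have hpy := poch_pos hy n
  simp only [Pi.div_apply]
  rw [poch_succ, poch_succ, Real.rpow_sub hnpos]
  field_simp

lemma poch_one_eq (x : ℝ) : poch x 1 = x := by simp [poch]

lemma poch_succ' (x : ℝ) (n : ℕ) : poch x (n + 1) = x * poch (x + 1) n := by
  rw [add_comm n 1, poch_add, poch_one_eq]; norm_num

lemma poch_mono_left {x y : ℝ} (hx : 0 < x) (hxy : x ≤ y) (k : ℕ) :
    poch x k ≤ poch y k := by
  refine Finset.prod_le_prod (fun i _ => by positivity) fun i _ => by linarith

noncomputable def hg2 (a b c : ℝ) (l : ℕ) : ℝ :=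
  poch a l * poch b l / (poch c l * l.factorial)

lemma term_isBigO (a b : ℝ) {c : ℝ} (hc : 0 < c) :
    (fun l : ℕ => poch a l * poch b l / (poch c l * l.factorial)) =O[atTop]
      fun l : ℕ => (l : ℝ) ^ (a + b - c - 1) := by
  have h1 := poch_ratio_tendsto a hc
  have h2 := poch_ratio_tendsto b one_pos
  have hb : (fun l : ℕ => (poch a l / poch c l * (l:ℝ) ^ (c - a)) *
      (poch b l / poch 1 l * (l:ℝ) ^ (1 - b))) =O[atTop] (fun _ : ℕ => (1:ℝ)) :=
    (h1.mul h2).isBigO_one ℝ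
  have hb2 := hb.mul (isBigO_refl (fun l : ℕ => (l:ℝ) ^ (a + b - c - 1)) atTop)
  simp only [one_mul] at hb2
  refine hb2.congr' ?_ EventuallyEq.rfl
  filter_upwards [eventually_ge_atTop 1] with l hl
  have hlpos : (0:ℝ) < l := by exact_mod_cast hl
  have h3 : (l:ℝ) ^ (c - a) * ((l:ℝ) ^ (1 - b) * (l:ℝ) ^ (a + b - c - 1)) = 1 := by
    rw [← Real.rpow_add hlpos, ← Real.rpow_add hlpos,
      show c - a + (1 - b + (a + b - c - 1)) = 0 by ring, Real.rpow_zero]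
  rw [poch_one]
  calc poch a l / poch c l * (l:ℝ)^(c-a) * (poch b l / (l.factorial:ℝ) * (l:ℝ)^(1-b)) *
        (l:ℝ)^(a+b-c-1)
      = poch a l * poch b l / (poch c l * (l.factorial:ℝ)) *
        ((l:ℝ)^(c-a) * ((l:ℝ)^(1-b) * (l:ℝ)^(a+b-c-1))) := by ring
    _ = _ := by rw [h3, mul_one]

lemma term_summable (a b : ℝ) {c : ℝ} (hc : 0 < c) (hs : 0 < c - a - b) :
    Summable (hg2 a b c) := by
  refine summable_of_isBigO_nat ?_ (term_isBigO a b hc)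
  rw [Real.summable_nat_rpow]
  linarith

lemma hg2_step (a b : ℝ) {c : ℝ} (hc : 0 < c) (m : ℕ) :
    c * (c - a - b) * hg2 a b c m - (c - a) * (c - b) * hg2 a b (c + 1) m
      = c * m * hg2 a b c m - c * (m + 1) * hg2 a b c (m + 1) := by
  unfold hg2
  have hR := poch_pos hc m
  have hcm : (0 : ℝ) < c + m := by positivity
  have hF : (0 : ℝ) < (m.factorial : ℝ) := by exact_mod_cast m.factorial_pos
  have h1 : poch (c + 1) m = poch c m * (c + m) / c := by
    have := poch_succ' c m
    rw [poch_succ] at this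
    field_simp
    linarith [this]
  rw [h1, poch_succ a, poch_succ b, poch_succ c, Nat.factorial_succ]
  push_cast
  field_simp
  ring

lemma hg2_partial (a b : ℝ) {c : ℝ} (hc : 0 < c) (m : ℕ) :
    c * (c - a - b) * (∑ l ∈ Finset.range m, hg2 a b c l)
      - (c - a) * (c - b) * (∑ l ∈ Finset.range m, hg2 a b (c + 1) l)
      = -(c * m * hg2 a b c m) := by
  induction m with
  | zero => simp
  | succ m ih =>
    rw [Finset.sum_range_succ, Finset.sum_range_succ]
    have h := hg2_step a b hc m
    push_cast
    push_cast at ih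
    nlinarith [h, ih]

lemma hg2_mul_tendsto (a b : ℝ) {c : ℝ} (hc : 0 < c) (hs : 0 < c - a - b) :
    Tendsto (fun m : ℕ => (m : ℝ) * hg2 a b c m) atTop (nhds 0) := by
  have h1 : (fun m : ℕ => (m : ℝ) * hg2 a b c m) =O[atTop]
      fun m : ℕ => (m : ℝ) ^ (a + b - c) := by
    have h2 := (isBigO_refl (fun m : ℕ => (m : ℝ)) atTop).mul (term_isBigO a b hc)
    refine h2.congr' EventuallyEq.rfl ?_
    filter_upwards [eventually_ge_atTop 1] with m hm
    have hmpos : (0 : ℝ) < m := by exact_mod_cast hm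
    rw [show (m : ℝ) * (m : ℝ) ^ (a + b - c - 1)
        = (m : ℝ) ^ (1 : ℝ) * (m : ℝ) ^ (a + b - c - 1) by rw [Real.rpow_one],
      ← Real.rpow_add hmpos]
    norm_num
  have h3 : Tendsto (fun m : ℕ => (m : ℝ) ^ (a + b - c)) atTop (nhds 0) := by
    have := (tendsto_rpow_neg_atTop hs).comp tendsto_natCast_atTop_atTop
    simpa [show -(c - a - b) = a + b - c by ring, Function.comp_def] using this
  exact h1.trans_tendsto h3

lemma contiguous (a b : ℝ) {c : ℝ} (hc : 0 < c) (hs : 0 < c - a - b) :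
    c * (c - a - b) * ∑' l, hg2 a b c l
      = (c - a) * (c - b) * ∑' l, hg2 a b (c + 1) l := by
  have hsum1 : Summable (hg2 a b c) := term_summable a b hc hs
  have hsum2 : Summable (hg2 a b (c + 1)) :=
    term_summable a b (by linarith) (by linarith)
  have hT1 := hsum1.hasSum.tendsto_sum_nat
  have hT2 := hsum2.hasSum.tendsto_sum_nat
  have hL : Tendsto (fun m : ℕ =>
      c * (c - a - b) * (∑ l ∈ Finset.range m, hg2 a b c l)
      - (c - a) * (c - b) * (∑ l ∈ Finset.range m, hg2 a b (c + 1) l)) atTop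
      (nhds (c * (c - a - b) * ∑' l, hg2 a b c l
        - (c - a) * (c - b) * ∑' l, hg2 a b (c + 1) l)) :=
    ((tendsto_const_nhds.mul hT1).sub (tendsto_const_nhds.mul hT2))
  have hR : Tendsto (fun m : ℕ => -(c * m * hg2 a b c m)) atTop (nhds 0) := by
    have := (hg2_mul_tendsto a b hc hs).const_mul c
    simpa [mul_assoc] using this.neg
  have := tendsto_nhds_unique (hL.congr fun m => (hg2_partial a b hc m).symm ▸ rfl) hR
  · linarith [this]

lemma term_summable_abs (a b : ℝ) {c : ℝ} (hc : 0 < c) (hs : 0 < c - a - b) :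
    Summable (fun l => |hg2 a b c l|) := by
  have h := (term_isBigO a b hc).norm_left
  have : Summable (fun l : ℕ => (l : ℝ) ^ (a + b - c - 1)) := by
    rw [Real.summable_nat_rpow]; linarith
  have h2 := summable_of_isBigO_nat this h
  refine h2.congr fun l => ?_
  simp [hg2, Real.norm_eq_abs, abs_div, abs_mul, abs_of_pos (poch_pos hc l)]

lemma gamma_ratio_tendsto_one {a b c : ℝ} (hc : 0 < c) (hca : 0 < c - a)
    (hcb : 0 < c - b) (hs : 0 < c - a - b) :
    Tendsto (fun n : ℕ => Gamma (c - a + n) * Gamma (c - b + n) /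
      (Gamma (c + n) * Gamma (c - a - b + n))) atTop (nhds 1) := by
  have h1 := poch_ratio_tendsto (c - a) hc
  have h2 := poch_ratio_tendsto (c - b) hs
  have hprod := h1.mul h2
  set K : ℝ := Gamma (c - a) * Gamma (c - b) / (Gamma c * Gamma (c - a - b)) with hK
  have hlim : K * (Gamma c / Gamma (c - a) * (Gamma (c - a - b) / Gamma (c - b))) = 1 := by
    rw [hK]
    have g1 := Gamma_pos_of_pos hc
    have g2 := Gamma_pos_of_pos hca
    have g3 := Gamma_pos_of_pos hcb
    have g4 := Gamma_pos_of_pos hs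
    field_simp
  have hmain := hprod.const_mul K
  rw [show K * (Gamma c / Gamma (c - a) * (Gamma (c - a - b) / Gamma (c - b))) = 1 from hlim] at hmain
  refine Tendsto.congr' ?_ hmain
  filter_upwards [eventually_ge_atTop 1] with n hn
  have hnpos : (0 : ℝ) < n := by exact_mod_cast hn
  have hexp : (n : ℝ) ^ (c - (c - a)) * (n : ℝ) ^ (c - a - b - (c - b)) = 1 := by
    rw [← Real.rpow_add hnpos, show c - (c - a) + (c - a - b - (c - b)) = 0 by ring,
      Real.rpow_zero]
  rw [Gamma_poch hca, Gamma_poch hcb, Gamma_poch hc, Gamma_poch hs]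
  have hp1 := (poch_pos hc n).ne'
  have hp2 := (poch_pos hs n).ne'
  have hg1 := (Gamma_pos_of_pos hc).ne'
  have hg4 := (Gamma_pos_of_pos hs).ne'
  calc K * (poch (c - a) n / poch c n * (n:ℝ) ^ (c - (c - a)) *
        (poch (c - b) n / poch (c - a - b) n * (n:ℝ) ^ (c - a - b - (c - b))))
      = K * (poch (c - a) n * poch (c - b) n / (poch c n * poch (c - a - b) n)) *
        ((n:ℝ) ^ (c - (c - a)) * (n:ℝ) ^ (c - a - b - (c - b))) := by ring
    _ = K * (poch (c - a) n * poch (c - b) n / (poch c n * poch (c - a - b) n)) := by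
        rw [hexp, mul_one]
    _ = Gamma (c - a) * poch (c - a) n * (Gamma (c - b) * poch (c - b) n) /
        (Gamma c * poch c n * (Gamma (c - a - b) * poch (c - a - b) n)) := by
        rw [hK]; field_simp

lemma poch_shift_ineq {c d : ℝ} (hc : 0 < c) (hcd : c ≤ d) (k : ℕ) (hk : 1 ≤ k) :
    d * poch c k ≤ c * poch d k := by
  obtain ⟨j, rfl⟩ := Nat.exists_eq_add_of_le hk
  clear hk
  induction j with
  | zero => simp [poch_succ, poch_zero]; nlinarith
  | succ j ih =>
    rw [show 1 + (j + 1) = (1 + j) + 1 by ring, poch_succ, poch_succ]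
    have hpd : 0 ≤ poch d (1 + j) := le_of_lt (poch_pos (lt_of_lt_of_le hc hcd) _)
    have h1 : (0:ℝ) < c + (1 + j : ℕ) := by positivity
    have h2 : c + (1 + j : ℕ) ≤ d + (1 + j : ℕ) := by linarith
    calc d * (poch c (1 + j) * (c + (1 + j : ℕ)))
        = d * poch c (1 + j) * (c + (1 + j : ℕ)) := by ring
      _ ≤ c * poch d (1 + j) * (c + (1 + j : ℕ)) := by
          exact mul_le_mul_of_nonneg_right ih (le_of_lt h1)

      _ ≤ c * poch d (1 + j) * (d + (1 + j : ℕ)) := by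
          refine mul_le_mul_of_nonneg_left h2 ?_
          positivity
      _ = c * (poch d (1 + j) * (d + (1 + j : ℕ))) := by ring

lemma hg2_shift_abs_le (a b : ℝ) {c d : ℝ} (hc : 0 < c) (hcd : c ≤ d) (k : ℕ) (hk : 1 ≤ k) :
    |hg2 a b d k| ≤ c / d * |hg2 a b c k| := by
  have hd : 0 < d := lt_of_lt_of_le hc hcd
  have hpc := poch_pos hc k
  have hpd := poch_pos hd k
  have hF : (0:ℝ) < (k.factorial : ℝ) := by exact_mod_cast k.factorial_pos
  have hkey := poch_shift_ineq hc hcd k hk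
  unfold hg2
  rw [abs_div, abs_div, abs_of_pos (by positivity : (0:ℝ) < poch d k * k.factorial),
    abs_of_pos (by positivity : (0:ℝ) < poch c k * k.factorial)]
  set A := |poch a k * poch b k| with hA
  have hnum : 0 ≤ A := abs_nonneg _
  have h := mul_le_mul_of_nonneg_left hkey hnum
  rw [show c / d * (A / (poch c k * (k.factorial:ℝ)))
      = c * A / (d * (poch c k * (k.factorial:ℝ))) by ring]
  rw [div_le_div_iff₀ (by positivity) (by positivity)]
  have h2 : A * (d * poch c k) * k.factorial ≤ A * (c * poch d k) * k.factorial :=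
    mul_le_mul_of_nonneg_right h hF.le
  nlinarith [h2]

set_option maxHeartbeats 1000000 in
lemma T_shift_tendsto_one (a b : ℝ) {c : ℝ} (hc : 0 < c) (hs : 0 < c - a - b) :
    Tendsto (fun n : ℕ => ∑' l, hg2 a b (c + n) l) atTop (nhds 1) := by
  have hK2 : Summable (fun l => |hg2 a b c (l + 1)|) :=
    (summable_nat_add_iff (f := fun l => |hg2 a b c l|) 1).2 (term_summable_abs a b hc hs)
  set K₂ : ℝ := ∑' l, |hg2 a b c (l + 1)| with hK2def
  have hbound : ∀ n : ℕ, |(∑' l, hg2 a b (c + n) l) - 1| ≤ c / (c + n) * K₂ := by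
    intro n
    have hnn : (0:ℝ) ≤ (n : ℝ) := Nat.cast_nonneg n
    have hcn : (0:ℝ) < c + n := by linarith
    have hcle : c ≤ c + n := by linarith
    have hsum : Summable (hg2 a b (c + n)) :=
      term_summable a b hcn (by linarith)
    have habs : Summable (fun l => |hg2 a b (c + n) (l + 1)|) :=
      (summable_nat_add_iff (f := fun l => |hg2 a b (c + n) l|) 1).2
        (term_summable_abs a b hcn (by linarith))
    have h0 : hg2 a b (c + n) 0 = 1 := by simp [hg2, poch_zero]
    have hsplit := Summable.tsum_eq_zero_add hsum
    rw [hsplit, h0, add_sub_cancel_left]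
    calc |∑' l, hg2 a b (c + n) (l + 1)|
        ≤ ∑' l, |hg2 a b (c + n) (l + 1)| := by
          simpa [Real.norm_eq_abs] using
            norm_tsum_le_tsum_norm (f := fun l => hg2 a b (c + n) (l + 1))
              (by simpa [Real.norm_eq_abs] using habs)
      _ ≤ ∑' l, c / (c + n) * |hg2 a b c (l + 1)| := by
          refine Summable.tsum_le_tsum (fun l => ?_) habs (hK2.mul_left _)
          exact hg2_shift_abs_le a b hc hcle (l + 1) (Nat.le_add_left 1 l)
      _ = c / (c + n) * K₂ := tsum_mul_left
  have hto0 : Tendsto (fun n : ℕ => c / (c + n) * K₂) atTop (nhds 0) := by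
    have h1 : Tendsto (fun n : ℕ => c / (c + n)) atTop (nhds 0) :=
      Tendsto.div_atTop tendsto_const_nhds
        (tendsto_atTop_add_const_left _ c tendsto_natCast_atTop_atTop)
    simpa using h1.mul_const K₂
  have hdiff : Tendsto (fun n : ℕ => (∑' l, hg2 a b (c + n) l) - 1) atTop (nhds 0) :=
    squeeze_zero_norm (fun n => by simpa [Real.norm_eq_abs] using hbound n) hto0
  have := hdiff.add_const 1
  simpa using this

lemma gauss_alg (x y z w T0 T1 G1 G2 G3 G4 : ℝ) (hx : x ≠ 0) (hw : w ≠ 0)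
    (hG1 : G1 ≠ 0) (hG4 : G4 ≠ 0) (h : x * w * T0 = y * z * T1) :
    T1 * (y * G2 * (z * G3) / (x * G1 * (w * G4))) = T0 * (G2 * G3 / (G1 * G4)) := by
  have e1 : T1 * (y * G2 * (z * G3) / (x * G1 * (w * G4)))
      = y * z * T1 * (G2 * G3 / (G1 * G4)) / (x * w) := by
    field_simp
  rw [e1, ← h]
  field_simp

set_option maxHeartbeats 1000000 in
lemma gauss (a b : ℝ) {c : ℝ} (hc : 0 < c) (hca : 0 < c - a) (hcb : 0 < c - b)
    (hs : 0 < c - a - b) :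
    ∑' l, hg2 a b c l = Gamma c * Gamma (c - a - b) / (Gamma (c - a) * Gamma (c - b)) := by
  set Φ : ℕ → ℝ := fun n => (∑' l, hg2 a b (c + n) l) *
    (Gamma (c - a + n) * Gamma (c - b + n) / (Gamma (c + n) * Gamma (c - a - b + n))) with hΦ
  have hstep : ∀ n : ℕ, Φ (n + 1) = Φ n := by
    intro n
    have hnn : (0:ℝ) ≤ (n : ℝ) := Nat.cast_nonneg n
    have hcn : (0:ℝ) < c + n := by linarith
    have hcan : (0:ℝ) < c - a + n := by linarith
    have hcbn : (0:ℝ) < c - b + n := by linarith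
    have hssn : (0:ℝ) < c - a - b + n := by linarith
    have hcontig := contiguous a b hcn (by linarith)
    have e1 : c + ((n : ℕ) + 1 : ℕ) = (c + n) + 1 := by push_cast; ring
    have e2 : c - a + ((n : ℕ) + 1 : ℕ) = (c - a + n) + 1 := by push_cast; ring
    have e3 : c - b + ((n : ℕ) + 1 : ℕ) = (c - b + n) + 1 := by push_cast; ring
    have e4 : c - a - b + ((n : ℕ) + 1 : ℕ) = (c - a - b + n) + 1 := by push_cast; ring
    have hca' : (c + (n:ℝ)) - a = c - a + n := by ring
    have hcb' : (c + (n:ℝ)) - b = c - b + n := by ring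
    have hcs' : (c + (n:ℝ)) - a - b = c - a - b + n := by ring
    rw [hcs', hcb', hca'] at hcontig
    simp only [hΦ]
    rw [e1, e2, e3, e4, Gamma_add_one hcn.ne', Gamma_add_one hcan.ne',
      Gamma_add_one hcbn.ne', Gamma_add_one hssn.ne']
    exact gauss_alg (c + n) (c - a + n) (c - b + n) (c - a - b + n) _ _ _ _ _ _
      hcn.ne' hssn.ne' (Gamma_pos_of_pos hcn).ne' (Gamma_pos_of_pos hssn).ne' hcontig
  have hconst : ∀ n : ℕ, Φ n = Φ 0 := by
    intro n
    induction n with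
    | zero => rfl
    | succ n ih => rw [hstep n, ih]
  have hlim : Tendsto Φ atTop (nhds 1) := by
    have h1 := T_shift_tendsto_one a b hc hs
    have h2 := gamma_ratio_tendsto_one hc hca hcb hs
    simpa using h1.mul h2
  have hlim0 : Tendsto Φ atTop (nhds (Φ 0)) :=
    Tendsto.congr (fun n => (hconst n).symm) tendsto_const_nhds
  have hΦ0 : Φ 0 = 1 := tendsto_nhds_unique hlim0 hlim
  simp only [hΦ, Nat.cast_zero, add_zero] at hΦ0
  have g1 := Gamma_pos_of_pos hc
  have g2 := Gamma_pos_of_pos hca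
  have g3 := Gamma_pos_of_pos hcb
  have g4 := Gamma_pos_of_pos hs
  field_simp at hΦ0 ⊢
  linarith [hΦ0]

lemma mvt_rpow {s : ℝ} (hs : 0 < s) {x : ℝ} (hx : 1 ≤ x) :
    x ^ (-1 - s) ≤ 2 ^ (1 + s) / s * (x ^ (-s) - (x + 1) ^ (-s)) := by
  have hx0 : (0:ℝ) < x := lt_of_lt_of_le one_pos hx
  obtain ⟨ξ, hξ, hslope⟩ := exists_hasDerivAt_eq_slope (fun y : ℝ => y ^ (-s))
    (fun y : ℝ => -s * y ^ (-s - 1)) (by linarith : x < x + 1)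
    (by
      refine ContinuousOn.rpow_const continuousOn_id fun y hy => Or.inl ?_
      have : (1:ℝ) ≤ y := le_trans hx hy.1
      linarith)
    (by
      intro y hy
      have hy0 : (0:ℝ) < y := lt_trans hx0 hy.1
      simpa using Real.hasDerivAt_rpow_const (p := -s) (Or.inl hy0.ne'))
  have hξx : x < ξ := hξ.1
  have hξx1 : ξ < x + 1 := hξ.2
  have hξ0 : (0:ℝ) < ξ := lt_trans hx0 hξx
  have hslope' : x ^ (-s) - (x + 1) ^ (-s) = s * ξ ^ (-s - 1) := by
    have h1 : x + 1 - x = 1 := by ring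
    rw [h1, div_one] at hslope
    linarith [hslope]
  have hle : (2:ℝ) ^ (-s - 1) * x ^ (-s - 1) ≤ ξ ^ (-s - 1) := by
    have h2x : ξ ≤ 2 * x := by linarith
    have := Real.rpow_le_rpow_of_nonpos hξ0 h2x (by linarith : -s - 1 ≤ 0)
    calc (2:ℝ) ^ (-s - 1) * x ^ (-s - 1) = (2 * x) ^ (-s - 1) := by
          rw [Real.mul_rpow (by norm_num) hx0.le]
      _ ≤ ξ ^ (-s - 1) := this
  have hconst : (2:ℝ) ^ (1 + s) * (2:ℝ) ^ (-s - 1) = 1 := by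
    rw [← Real.rpow_add (by norm_num : (0:ℝ) < 2),
      show (1:ℝ) + s + (-s - 1) = 0 by ring, Real.rpow_zero]
  have h2pos : (0:ℝ) < (2:ℝ) ^ (1 + s) := Real.rpow_pos_of_pos (by norm_num) _
  rw [hslope']
  have step : (2:ℝ) ^ (1 + s) / s * (s * ξ ^ (-s - 1))
      = (2:ℝ) ^ (1 + s) * ξ ^ (-s - 1) := by
    field_simp
  rw [step]
  calc x ^ (-1 - s) = 1 * x ^ (-s - 1) := by rw [one_mul]; ring_nf
    _ = (2:ℝ) ^ (1 + s) * ((2:ℝ) ^ (-s - 1) * x ^ (-s - 1)) := by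
        rw [← mul_assoc, hconst]
    _ ≤ (2:ℝ) ^ (1 + s) * ξ ^ (-s - 1) := by
        exact mul_le_mul_of_nonneg_left hle h2pos.le

lemma telescope_summable {s : ℝ} (hs : 0 < s) (m : ℕ) :
    Summable fun i : ℕ => ((i : ℝ) + m) ^ (-1 - s) := by
  have h0 : Summable (fun n : ℕ => (n : ℝ) ^ (-1 - s)) := by
    rw [Real.summable_nat_rpow]; linarith
  have h1 := (summable_nat_add_iff (f := fun n : ℕ => (n : ℝ) ^ (-1 - s)) m).2 h0
  refine h1.congr fun i => ?_
  push_cast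
  norm_num

lemma telescope_rpow_tail {s : ℝ} (hs : 0 < s) (m : ℕ) (hm : 1 ≤ m) :
    ∑' i : ℕ, ((i : ℝ) + m) ^ (-1 - s) ≤ 2 ^ (1 + s) / s * (m : ℝ) ^ (-s) := by
  set f : ℕ → ℝ := fun i => ((i : ℝ) + m) ^ (-s) with hf
  have hmpos : (0:ℝ) < m := by exact_mod_cast hm
  have hpos : ∀ i : ℕ, (0:ℝ) < (i : ℝ) + m := fun i => by positivity
  have hdec : ∀ i : ℕ, 0 ≤ f i - f (i + 1) := by
    intro i
    have := Real.rpow_le_rpow_of_nonpos (hpos i)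
      (by push_cast; linarith : (i : ℝ) + m ≤ ((i + 1 : ℕ) : ℝ) + m) (by linarith : -s ≤ 0)
    simpa [hf] using sub_nonneg.2 this
  have hlim : Tendsto f atTop (nhds 0) := by
    have h1 : Tendsto (fun i : ℕ => (i : ℝ) + m) atTop atTop :=
      tendsto_atTop_add_const_right _ _ tendsto_natCast_atTop_atTop
    exact (tendsto_rpow_neg_atTop hs).comp h1
  have htel : HasSum (fun i => f i - f (i + 1)) (f 0) := by
    rw [hasSum_iff_tendsto_nat_of_nonneg hdec]
    have : ∀ n : ℕ, ∑ i ∈ Finset.range n, (f i - f (i + 1)) = f 0 - f n :=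
      fun n => Finset.sum_range_sub' f n
    simp_rw [this]
    simpa using tendsto_const_nhds.sub hlim
  have hsum1 := telescope_summable hs m
  calc ∑' i : ℕ, ((i : ℝ) + m) ^ (-1 - s)
      ≤ ∑' i : ℕ, 2 ^ (1 + s) / s * (f i - f (i + 1)) := by
        refine Summable.tsum_le_tsum (fun i => ?_) hsum1 (htel.summable.mul_left _)
        have hge : (1:ℝ) ≤ (i : ℝ) + m := by
          have h1 : (0:ℝ) ≤ (i:ℝ) := Nat.cast_nonneg i
          have h2 : (1:ℝ) ≤ (m:ℝ) := by exact_mod_cast hm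
          linarith
        have hmain := mvt_rpow hs hge
        have hfi : f (i + 1) = ((i:ℝ) + (m:ℝ) + 1) ^ (-s) := by
          simp only [hf]
          push_cast
          ring_nf
        have hfi0 : f i = ((i:ℝ) + (m:ℝ)) ^ (-s) := rfl
        rw [hfi, hfi0]
        exact hmain
    _ = 2 ^ (1 + s) / s * (f 0) := by
        rw [tsum_mul_left, htel.tsum_eq]
    _ = 2 ^ (1 + s) / s * (m : ℝ) ^ (-s) := by
        simp [hf]

lemma t3_isBigO {a b c d e : ℝ} (ha : 0 < a) (hb : 0 < b) (hc : 0 < c)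
    (hd : 0 < d) (he : 0 < e) :
    (fun l : ℕ => Gamma (a + l) * Gamma (b + l) * Gamma (c + l) /
        (Gamma (d + l) * Gamma (e + l) * Gamma (1 + l))) =O[atTop]
      fun l : ℕ => (l : ℝ) ^ (a + b + c - d - e - 1) := by
  have h1 := poch_ratio_tendsto a hd
  have h2 := poch_ratio_tendsto b he
  have h3 := poch_ratio_tendsto c one_pos
  have hbig : (fun l : ℕ => (poch a l / poch d l * (l:ℝ) ^ (d - a)) *
      (poch b l / poch e l * (l:ℝ) ^ (e - b)) *
      (poch c l / poch 1 l * (l:ℝ) ^ (1 - c))) =O[atTop] (fun _ : ℕ => (1:ℝ)) :=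
    ((h1.mul h2).mul h3).isBigO_one ℝ
  have hbig2 := (hbig.mul (isBigO_refl (fun l : ℕ => (l:ℝ) ^ (a + b + c - d - e - 1)) atTop)).const_mul_left
    (Gamma a * Gamma b * Gamma c / (Gamma d * Gamma e))
  simp only [one_mul] at hbig2
  refine hbig2.congr' ?_ EventuallyEq.rfl
  filter_upwards [eventually_ge_atTop 1] with l hl
  have hlpos : (0:ℝ) < l := by exact_mod_cast hl
  have hexp : (l:ℝ) ^ (d - a) * ((l:ℝ) ^ (e - b) * ((l:ℝ) ^ (1 - c) *
      (l:ℝ) ^ (a + b + c - d - e - 1))) = 1 := by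
    rw [← Real.rpow_add hlpos, ← Real.rpow_add hlpos, ← Real.rpow_add hlpos,
      show d - a + (e - b + (1 - c + (a + b + c - d - e - 1))) = 0 by ring, Real.rpow_zero]
  have e1 : Gamma (a + l) = Gamma a * poch a l := Gamma_poch ha l
  have e2 : Gamma (b + l) = Gamma b * poch b l := Gamma_poch hb l
  have e3 : Gamma (c + l) = Gamma c * poch c l := Gamma_poch hc l
  have e4 : Gamma (d + l) = Gamma d * poch d l := Gamma_poch hd l
  have e5 : Gamma (e + l) = Gamma e * poch e l := Gamma_poch he l
  have e6 : Gamma (1 + l) = poch 1 l := by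
    rw [Gamma_poch one_pos l, Real.Gamma_one, one_mul]
  rw [e1, e2, e3, e4, e5, e6]
  calc Gamma a * Gamma b * Gamma c / (Gamma d * Gamma e) *
        (poch a l / poch d l * (l:ℝ) ^ (d - a) * (poch b l / poch e l * (l:ℝ) ^ (e - b)) *
          (poch c l / poch 1 l * (l:ℝ) ^ (1 - c)) * (l:ℝ) ^ (a + b + c - d - e - 1))
      = Gamma a * Gamma b * Gamma c / (Gamma d * Gamma e) *
        (poch a l / poch d l * (poch b l / poch e l) * (poch c l / poch 1 l)) *
        ((l:ℝ) ^ (d - a) * ((l:ℝ) ^ (e - b) * ((l:ℝ) ^ (1 - c) *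
          (l:ℝ) ^ (a + b + c - d - e - 1)))) := by ring
    _ = Gamma a * Gamma b * Gamma c / (Gamma d * Gamma e) *
        (poch a l / poch d l * (poch b l / poch e l) * (poch c l / poch 1 l)) := by
        rw [hexp, mul_one]
    _ = Gamma a * poch a l * (Gamma b * poch b l) * (Gamma c * poch c l) /
        (Gamma d * poch d l * (Gamma e * poch e l) * poch 1 l) := by
        have p1 := (poch_pos hd l).ne'
        have p2 := (poch_pos he l).ne'
        have p3 := (poch_pos one_pos l).ne'
        have g1 := (Gamma_pos_of_pos hd).ne'
        have g2 := (Gamma_pos_of_pos he).ne'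
        field_simp

set_option maxHeartbeats 2000000 in
theorem three_F_two_partial_sums (a₁ a₂ a₃ b₁ b₂ s : ℝ)
    (ha₁ : 0 < a₁) (ha₂ : 0 < a₂) (ha₃ : 0 < a₃) (hb₁ : 0 < b₁) (hb₂ : 0 < b₂)
    (hs : s = b₁ + b₂ - a₁ - a₂ - a₃) (hspos : 0 < s) :
    Tendsto (fun m : ℕ => ∑ l ∈ Finset.range m,
        Gamma (a₁ + l) * Gamma (a₂ + l) * Gamma (a₃ + l) /
          (Gamma (b₁ + l) * Gamma (b₂ + l) * Gamma (1 + l)))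
      atTop
      (nhds (Gamma a₁ * Gamma a₂ * Gamma s / (Gamma (a₁ + s) * Gamma (a₂ + s)) *
        ∑' k : ℕ, poch s k * poch (b₂ - a₃) k * poch (b₁ - a₃) k /
          (poch (a₁ + s) k * poch (a₂ + s) k * Nat.factorial k))) ∧
    (fun m : ℕ =>
        (∑ l ∈ Finset.range m,
          Gamma (a₁ + l) * Gamma (a₂ + l) * Gamma (a₃ + l) /
            (Gamma (b₁ + l) * Gamma (b₂ + l) * Gamma (1 + l)))
        - Gamma a₁ * Gamma a₂ * Gamma s / (Gamma (a₁ + s) * Gamma (a₂ + s)) *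
            ∑' k : ℕ, poch s k * poch (b₂ - a₃) k * poch (b₁ - a₃) k /
              (poch (a₁ + s) k * poch (a₂ + s) k * Nat.factorial k))
      =O[atTop] fun m : ℕ => (m : ℝ) ^ (-s) := by
  have hcastnn : ∀ n : ℕ, (0:ℝ) ≤ n := fun n => Nat.cast_nonneg n
  have hβ : (0:ℝ) < a₁ + a₂ + s := by linarith
  set t : ℕ → ℝ := fun l : ℕ => Gamma (a₁ + l) * Gamma (a₂ + l) * Gamma (a₃ + l) /
      (Gamma (b₁ + l) * Gamma (b₂ + l) * Gamma (1 + l)) with ht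
  set B : ℕ → ℝ := fun k : ℕ => poch s k * poch (b₂ - a₃) k * poch (b₁ - a₃) k /
      (poch (a₁ + s) k * poch (a₂ + s) k * (Nat.factorial k : ℝ)) with hB
  set A : ℕ → ℝ := fun k => poch (b₁ - a₃) k * poch (b₂ - a₃) k / (k.factorial : ℝ) with hA
  set g : ℕ → ℕ → ℝ := fun l k => Gamma (a₁ + l) * Gamma (a₂ + l) * A k /
      (Gamma (1 + l) * Gamma (a₁ + a₂ + s + l + k)) with hg
  have hβl : ∀ l : ℕ, (0:ℝ) < a₁ + a₂ + s + l := fun l => by have := hcastnn l; linarith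
  have hl1 : ∀ l : ℕ, (0:ℝ) < 1 + (l:ℝ) := fun l => by have := hcastnn l; linarith
  have hca : ∀ l : ℕ, (0:ℝ) < a₁ + a₂ + s + l - (b₁ - a₃) := fun l => by
    have := hcastnn l; linarith
  have hcb : ∀ l : ℕ, (0:ℝ) < a₁ + a₂ + s + l - (b₂ - a₃) := fun l => by
    have := hcastnn l; linarith
  have hcs : ∀ l : ℕ, (0:ℝ) < a₁ + a₂ + s + l - (b₁ - a₃) - (b₂ - a₃) := fun l => by
    have := hcastnn l; linarith
  have e₁ : ∀ l : ℕ, a₁ + a₂ + s + (l:ℝ) - (b₁ - a₃) - (b₂ - a₃) = a₃ + l := fun l => by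
    linarith
  have e₂ : ∀ l : ℕ, a₁ + a₂ + s + (l:ℝ) - (b₁ - a₃) = b₂ + l := fun l => by linarith
  have e₃ : ∀ l : ℕ, a₁ + a₂ + s + (l:ℝ) - (b₂ - a₃) = b₁ + l := fun l => by linarith
  have hfacpos : ∀ k : ℕ, (0:ℝ) < (k.factorial : ℝ) := fun k => by
    exact_mod_cast k.factorial_pos
  -- eq1 : expansion of g as row function
  have eq1 : ∀ l k : ℕ, g l k =
      (Gamma (a₁ + l) * Gamma (a₂ + l) / (Gamma (1 + l) * Gamma (a₁ + a₂ + s + l))) *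
        hg2 (b₁ - a₃) (b₂ - a₃) (a₁ + a₂ + s + l) k := by
    intro l k
    have hGk : Gamma (a₁ + a₂ + s + l + k)
        = Gamma (a₁ + a₂ + s + l) * poch (a₁ + a₂ + s + l) k := Gamma_poch (hβl l) k
    simp only [hg, hA, hg2]
    rw [hGk]
    have n1 := (Gamma_pos_of_pos (hl1 l)).ne'
    have n2 := (Gamma_pos_of_pos (hβl l)).ne'
    have n3 := (poch_pos (hβl l) k).ne'
    have n4 := (hfacpos k).ne'
    field_simp
    try ring
    try exact Or.inl trivial
  -- eq2 : expansion of g as column function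
  have eq2 : ∀ l k : ℕ, g l k =
      (A k * Gamma a₁ * Gamma a₂ / Gamma (a₁ + a₂ + s + k)) *
        hg2 a₁ a₂ (a₁ + a₂ + s + k) l := by
    intro l k
    have e0 : a₁ + a₂ + s + (l:ℝ) + (k:ℝ) = a₁ + a₂ + s + (k:ℝ) + (l:ℝ) := by ring
    have hGk : Gamma (a₁ + a₂ + s + (k:ℝ) + (l:ℝ))
        = Gamma (a₁ + a₂ + s + k) * poch (a₁ + a₂ + s + k) l := Gamma_poch (hβl k) l
    have hΓ1 : Gamma (a₁ + (l:ℝ)) = Gamma a₁ * poch a₁ l := Gamma_poch ha₁ l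
    have hΓ2 : Gamma (a₂ + (l:ℝ)) = Gamma a₂ * poch a₂ l := Gamma_poch ha₂ l
    have hΓl : Gamma (1 + (l:ℝ)) = (l.factorial : ℝ) := by
      rw [Gamma_poch one_pos l, Real.Gamma_one, one_mul, poch_one]
    simp only [hg, hg2]
    rw [e0, hGk, hΓ1, hΓ2, hΓl]
    have n2 := (Gamma_pos_of_pos (hβl k)).ne'
    have n3 := (poch_pos (hβl k) l).ne'
    have n4 := (hfacpos l).ne'
    field_simp
  -- step1 : row sums
  have step1 : ∀ l : ℕ, HasSum (g l) (t l) := by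
    intro l
    have hsum := term_summable (b₁ - a₃) (b₂ - a₃) (hβl l) (hcs l)
    have hhs := hsum.hasSum
    rw [hsum.hasSum_iff_tendsto_nat] at hhs
    rw [← hsum.hasSum_iff_tendsto_nat] at hhs
    rw [gauss (b₁ - a₃) (b₂ - a₃) (hβl l) (hca l) (hcb l) (hcs l)] at hhs
    rw [e₁ l, e₂ l, e₃ l] at hhs
    have hhs2 := hhs.mul_left
      (Gamma (a₁ + l) * Gamma (a₂ + l) / (Gamma (1 + l) * Gamma (a₁ + a₂ + s + l)))
    have hfun : (fun k : ℕ =>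
        (Gamma (a₁ + l) * Gamma (a₂ + l) / (Gamma (1 + l) * Gamma (a₁ + a₂ + s + l))) *
          hg2 (b₁ - a₃) (b₂ - a₃) (a₁ + a₂ + s + l) k) = g l :=
      funext fun k => (eq1 l k).symm
    rw [hfun] at hhs2
    convert hhs2 using 1
    · rfl
    simp only [ht]
    have n1 := (Gamma_pos_of_pos (hl1 l)).ne'
    have n2 := (Gamma_pos_of_pos (hβl l)).ne'
    have n5 := (Gamma_pos_of_pos (show (0:ℝ) < b₁ + l by have := hcastnn l; linarith)).ne'
    have n6 := (Gamma_pos_of_pos (show (0:ℝ) < b₂ + l by have := hcastnn l; linarith)).ne'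
    field_simp
  -- step2 : column sums
  have hca2 : ∀ k : ℕ, (0:ℝ) < a₁ + a₂ + s + k - a₁ := fun k => by
    have := hcastnn k; linarith
  have hcb2 : ∀ k : ℕ, (0:ℝ) < a₁ + a₂ + s + k - a₂ := fun k => by
    have := hcastnn k; linarith
  have hcs2 : ∀ k : ℕ, (0:ℝ) < a₁ + a₂ + s + k - a₁ - a₂ := fun k => by
    have := hcastnn k; linarith
  have e₄ : ∀ k : ℕ, a₁ + a₂ + s + (k:ℝ) - a₁ - a₂ = s + k := fun k => by ring
  have e₅ : ∀ k : ℕ, a₁ + a₂ + s + (k:ℝ) - a₁ = a₂ + s + k := fun k => by ring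
  have e₆ : ∀ k : ℕ, a₁ + a₂ + s + (k:ℝ) - a₂ = a₁ + s + k := fun k => by ring
  have step2 : ∀ k : ℕ, HasSum (fun l => g l k)
      (A k * (Gamma a₁ * Gamma a₂ * Gamma (s + k) /
        (Gamma (a₁ + s + k) * Gamma (a₂ + s + k)))) := by
    intro k
    have hsum := term_summable a₁ a₂ (hβl k) (hcs2 k)
    have hhs := hsum.hasSum
    rw [gauss a₁ a₂ (hβl k) (hca2 k) (hcb2 k) (hcs2 k)] at hhs
    rw [e₄ k, e₅ k, e₆ k] at hhs
    have hhs2 := hhs.mul_left (A k * Gamma a₁ * Gamma a₂ / Gamma (a₁ + a₂ + s + k))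
    have hfun : (fun l : ℕ =>
        (A k * Gamma a₁ * Gamma a₂ / Gamma (a₁ + a₂ + s + k)) *
          hg2 a₁ a₂ (a₁ + a₂ + s + k) l) = fun l => g l k :=
      funext fun l => (eq2 l k).symm
    rw [hfun] at hhs2
    convert hhs2 using 1
    · rfl
    have n2 := (Gamma_pos_of_pos (hβl k)).ne'
    have n5 := (Gamma_pos_of_pos (show (0:ℝ) < a₁ + s + k by have := hcastnn k; linarith)).ne'
    have n6 := (Gamma_pos_of_pos (show (0:ℝ) < a₂ + s + k by have := hcastnn k; linarith)).ne'
    field_simp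
  -- abs identity
  have hCpos : ∀ l : ℕ, (0:ℝ) <
      Gamma (a₁ + l) * Gamma (a₂ + l) / (Gamma (1 + l) * Gamma (a₁ + a₂ + s + l)) := by
    intro l
    have g1 := Gamma_pos_of_pos (show (0:ℝ) < a₁ + l by have := hcastnn l; linarith)
    have g2 := Gamma_pos_of_pos (show (0:ℝ) < a₂ + l by have := hcastnn l; linarith)
    have g3 := Gamma_pos_of_pos (hl1 l)
    have g4 := Gamma_pos_of_pos (hβl l)
    exact div_pos (mul_pos g1 g2) (mul_pos g3 g4)
  have habs : ∀ l k : ℕ, |g l k| =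
      (Gamma (a₁ + l) * Gamma (a₂ + l) / (Gamma (1 + l) * Gamma (a₁ + a₂ + s + l))) *
        |hg2 (b₁ - a₃) (b₂ - a₃) (a₁ + a₂ + s + l) k| := by
    intro l k
    rw [eq1 l k, abs_mul, abs_of_pos (hCpos l)]
  -- step3 : joint summability
  have step3 : Summable (fun p : ℕ × ℕ => g p.1 p.2) := by
    rw [← summable_abs_iff]
    refine (summable_prod_of_nonneg fun p => abs_nonneg _).2 ⟨fun l => ?_, ?_⟩
    · exact ((term_summable_abs (b₁ - a₃) (b₂ - a₃) (hβl l) (hcs l)).mul_left _).congr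
        fun k => (habs l k).symm
    · have hcs0 : (0:ℝ) < a₁ + a₂ + s - (b₁ - a₃) - (b₂ - a₃) := by linarith
      have hS0sum : Summable (fun k => |hg2 (b₁ - a₃) (b₂ - a₃) (a₁ + a₂ + s) k|) :=
        term_summable_abs _ _ hβ hcs0
      set S₀ : ℝ := ∑' k, |hg2 (b₁ - a₃) (b₂ - a₃) (a₁ + a₂ + s) k| with hS₀
      have hperterm : ∀ l k : ℕ, |hg2 (b₁ - a₃) (b₂ - a₃) (a₁ + a₂ + s + l) k|
          ≤ |hg2 (b₁ - a₃) (b₂ - a₃) (a₁ + a₂ + s) k| := by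
        intro l k
        have hp1 := poch_pos hβ k
        have hp2 := poch_pos (hβl l) k
        have hmono : poch (a₁ + a₂ + s) k ≤ poch (a₁ + a₂ + s + l) k :=
          poch_mono_left hβ (by have := hcastnn l; linarith) k
        simp only [hg2, abs_div]
        rw [abs_of_pos (mul_pos hp2 (hfacpos k)), abs_of_pos (mul_pos hp1 (hfacpos k))]
        refine div_le_div_of_nonneg_left ?_ (mul_pos hp1 (hfacpos k)) ?_
        · positivity
        · exact mul_le_mul_of_nonneg_right hmono (hfacpos k).le
      have hbnd : ∀ l : ℕ, ∑' k, |g l k| ≤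
          (Gamma (a₁ + l) * Gamma (a₂ + l) / (Gamma (1 + l) * Gamma (a₁ + a₂ + s + l))) * S₀ := by
        intro l
        have h1 : ∑' k, |g l k| = (Gamma (a₁ + l) * Gamma (a₂ + l) /
            (Gamma (1 + l) * Gamma (a₁ + a₂ + s + l))) *
            ∑' k, |hg2 (b₁ - a₃) (b₂ - a₃) (a₁ + a₂ + s + l) k| := by
          rw [tsum_congr (habs l), tsum_mul_left]
        rw [h1]
        refine mul_le_mul_of_nonneg_left ?_ (hCpos l).le
        exact Summable.tsum_le_tsum (hperterm l)
          (term_summable_abs (b₁ - a₃) (b₂ - a₃) (hβl l) (hcs l)) hS0sum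
      have hClform : ∀ l : ℕ,
          Gamma (a₁ + l) * Gamma (a₂ + l) / (Gamma (1 + l) * Gamma (a₁ + a₂ + s + l))
          = (Gamma a₁ * Gamma a₂ / Gamma (a₁ + a₂ + s)) * hg2 a₁ a₂ (a₁ + a₂ + s) l := by
        intro l
        have hΓ1 : Gamma (a₁ + (l:ℝ)) = Gamma a₁ * poch a₁ l := Gamma_poch ha₁ l
        have hΓ2 : Gamma (a₂ + (l:ℝ)) = Gamma a₂ * poch a₂ l := Gamma_poch ha₂ l
        have hΓl : Gamma (1 + (l:ℝ)) = (l.factorial : ℝ) := by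
          rw [Gamma_poch one_pos l, Real.Gamma_one, one_mul, poch_one]
        have hΓβ : Gamma (a₁ + a₂ + s + (l:ℝ)) = Gamma (a₁ + a₂ + s) * poch (a₁ + a₂ + s) l :=
          Gamma_poch hβ l
        simp only [hg2]
        rw [hΓ1, hΓ2, hΓl, hΓβ]
        have n2 := (Gamma_pos_of_pos hβ).ne'
        have n3 := (poch_pos hβ l).ne'
        have n4 := (hfacpos l).ne'
        field_simp
      have hsumbnd : Summable (fun l : ℕ =>
          (Gamma (a₁ + l) * Gamma (a₂ + l) / (Gamma (1 + l) * Gamma (a₁ + a₂ + s + l))) * S₀) := by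
        have h2 : Summable (fun l : ℕ =>
            ((Gamma a₁ * Gamma a₂ / Gamma (a₁ + a₂ + s)) * hg2 a₁ a₂ (a₁ + a₂ + s) l) * S₀) :=
          (((term_summable a₁ a₂ hβ (by linarith)).mul_left _).mul_right _)
        exact h2.congr fun l => by rw [← hClform l]
      exact Summable.of_nonneg_of_le
        (fun l => tsum_nonneg fun k => abs_nonneg _) hbnd hsumbnd
  -- assemble HasSum t LIM
  have hsum_t : HasSum t (∑' p : ℕ × ℕ, g p.1 p.2) :=
    HasSum.prod_fiberwise step3.hasSum step1
  have step3' : Summable (fun p : ℕ × ℕ => g p.2 p.1) :=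
    (Equiv.prodComm ℕ ℕ).summable_iff.2 step3
  have hsum_Lk : HasSum (fun k => A k * (Gamma a₁ * Gamma a₂ * Gamma (s + k) /
      (Gamma (a₁ + s + k) * Gamma (a₂ + s + k)))) (∑' p : ℕ × ℕ, g p.2 p.1) :=
    HasSum.prod_fiberwise step3'.hasSum step2
  have hswap : ∑' p : ℕ × ℕ, g p.2 p.1 = ∑' p : ℕ × ℕ, g p.1 p.2 :=
    (Equiv.prodComm ℕ ℕ).tsum_eq (fun p : ℕ × ℕ => g p.1 p.2)
  have hLk_eq : ∀ k : ℕ,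
      Gamma a₁ * Gamma a₂ * Gamma s / (Gamma (a₁ + s) * Gamma (a₂ + s)) * B k
      = A k * (Gamma a₁ * Gamma a₂ * Gamma (s + k) /
        (Gamma (a₁ + s + k) * Gamma (a₂ + s + k))) := by
    intro k
    have hΓ1 : Gamma (s + (k:ℝ)) = Gamma s * poch s k := Gamma_poch hspos k
    have hΓ2 : Gamma (a₁ + s + (k:ℝ)) = Gamma (a₁ + s) * poch (a₁ + s) k :=
      Gamma_poch (by linarith) k
    have hΓ3 : Gamma (a₂ + s + (k:ℝ)) = Gamma (a₂ + s) * poch (a₂ + s) k :=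
      Gamma_poch (by linarith) k
    simp only [hB, hA]
    rw [hΓ1, hΓ2, hΓ3]
    have n1 := (Gamma_pos_of_pos (show (0:ℝ) < a₁ + s by linarith)).ne'
    have n2 := (Gamma_pos_of_pos (show (0:ℝ) < a₂ + s by linarith)).ne'
    have n3 := (poch_pos (show (0:ℝ) < a₁ + s by linarith) k).ne'
    have n4 := (poch_pos (show (0:ℝ) < a₂ + s by linarith) k).ne'
    have n5 := (hfacpos k).ne'
    field_simp
  have hL : HasSum t (Gamma a₁ * Gamma a₂ * Gamma s / (Gamma (a₁ + s) * Gamma (a₂ + s)) *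
      ∑' k, B k) := by
    have h1 : Gamma a₁ * Gamma a₂ * Gamma s / (Gamma (a₁ + s) * Gamma (a₂ + s)) * ∑' k, B k
        = ∑' p : ℕ × ℕ, g p.1 p.2 := by
      rw [← tsum_mul_left]
      rw [tsum_congr hLk_eq, hsum_Lk.tsum_eq, hswap]
    rw [h1]
    exact hsum_t
  constructor
  · exact hL.tendsto_sum_nat
  -- part 2 : error bound
  have hsummable := hL.summable
  have htval := hL.tsum_eq
  have htail : ∀ m : ℕ, (∑ l ∈ Finset.range m, t l)
      - Gamma a₁ * Gamma a₂ * Gamma s / (Gamma (a₁ + s) * Gamma (a₂ + s)) * ∑' k, B k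
      = -∑' i, t (i + m) := by
    intro m
    have h2 := Summable.sum_add_tsum_nat_add (f := t) m hsummable
    linarith [h2, htval]
  have hO := t3_isBigO ha₁ ha₂ ha₃ hb₁ hb₂
  simp only [show a₁ + a₂ + a₃ - b₁ - b₂ - 1 = -1 - s by linarith] at hO
  rw [← ht] at hO
  obtain ⟨C, hC⟩ := hO.bound
  obtain ⟨N₀, hN₀⟩ := eventually_atTop.1 hC
  have ht_nonneg : ∀ l : ℕ, 0 ≤ t l := by
    intro l
    have g1 := Gamma_pos_of_pos (show (0:ℝ) < a₁ + l by have := hcastnn l; linarith)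
    have g2 := Gamma_pos_of_pos (show (0:ℝ) < a₂ + l by have := hcastnn l; linarith)
    have g3 := Gamma_pos_of_pos (show (0:ℝ) < a₃ + l by have := hcastnn l; linarith)
    have g4 := Gamma_pos_of_pos (show (0:ℝ) < b₁ + l by have := hcastnn l; linarith)
    have g5 := Gamma_pos_of_pos (show (0:ℝ) < b₂ + l by have := hcastnn l; linarith)
    have g6 := Gamma_pos_of_pos (hl1 l)
    simp only [ht]
    exact le_of_lt (div_pos (mul_pos (mul_pos g1 g2) g3) (mul_pos (mul_pos g4 g5) g6))
  rw [isBigO_iff]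
  refine ⟨max C 0 * (2 ^ (1 + s) / s), ?_⟩
  filter_upwards [eventually_ge_atTop (max N₀ 1)] with m hm
  have hm1 : 1 ≤ m := le_trans (le_max_right _ _) hm
  have hmN : N₀ ≤ m := le_trans (le_max_left _ _) hm
  have hmpos : (0:ℝ) < m := by exact_mod_cast hm1
  have hterm : ∀ i : ℕ, t (i + m) ≤ max C 0 * ((i:ℝ) + m) ^ (-1 - s) := by
    intro i
    have him : N₀ ≤ i + m := le_trans hmN (Nat.le_add_left m i)
    have h := hN₀ (i + m) him
    have hcast : ((i + m : ℕ) : ℝ) = (i:ℝ) + m := by push_cast; ring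
    have hrpos : (0:ℝ) < ((i:ℝ) + m) ^ (-1 - s) :=
      Real.rpow_pos_of_pos (by have := hcastnn i; linarith) _
    rw [Real.norm_eq_abs, Real.norm_eq_abs, hcast, abs_of_nonneg (ht_nonneg _),
      abs_of_pos hrpos] at h
    calc t (i + m) ≤ C * ((i:ℝ) + m) ^ (-1 - s) := h
      _ ≤ max C 0 * ((i:ℝ) + m) ^ (-1 - s) :=
          mul_le_mul_of_nonneg_right (le_max_left _ _) hrpos.le
  have htail_sum : Summable (fun i => t (i + m)) := (summable_nat_add_iff m).2 hsummable
  have hbound : ∑' i, t (i + m) ≤ max C 0 * (2 ^ (1 + s) / s) * (m:ℝ) ^ (-s) := by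
    calc ∑' i, t (i + m) ≤ ∑' i : ℕ, max C 0 * ((i:ℝ) + m) ^ (-1 - s) :=
          Summable.tsum_le_tsum hterm htail_sum ((telescope_summable hspos m).mul_left _)
      _ = max C 0 * ∑' i : ℕ, ((i:ℝ) + m) ^ (-1 - s) := tsum_mul_left
      _ ≤ max C 0 * (2 ^ (1 + s) / s * (m:ℝ) ^ (-s)) :=
          mul_le_mul_of_nonneg_left (telescope_rpow_tail hspos m hm1) (le_max_right _ _)
      _ = max C 0 * (2 ^ (1 + s) / s) * (m:ℝ) ^ (-s) := by ring
  have htail_nn : 0 ≤ ∑' i, t (i + m) := tsum_nonneg fun i => ht_nonneg _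
  rw [Real.norm_eq_abs, Real.norm_eq_abs, htail m, abs_neg, abs_of_nonneg htail_nn,
    abs_of_pos (Real.rpow_pos_of_pos hmpos _)]
  exact hbound
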